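/- For a self-adjoint endomorphism A of an n-dimensional real inner product space with Newton transformations P_r, one has tr(A² P_r) = (−1)^r (S₁ S_{r+1} − (r + 2) S_{r+2}). -/

import Mathlib

open scoped InnerProductSpace

/-- The `r`-th elementary symmetric polynomial of `λ₁, …, λₙ`. -/
noncomputable def esymm (n r : ℕ) (l : Fin n → ℝ) : ℝ :=
  ∑ s ∈ (Finset.univ : Finset (Fin n)).powersetCard r, ∏ i ∈ s, l i

/-- The Newton transformations associated to an endomorphism `A` and the
elementary symmetric functions `S` of its eigenvalues:
`P₀ = I`, `P_r = (−1)^r S_r I + A ∘ P_{r−1}`. -/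
noncomputable def newtonP {E : Type*} [NormedAddCommGroup E] [InnerProductSpace ℝ E]
    (A : E →ₗ[ℝ] E) (S : ℕ → ℝ) : ℕ → (E →ₗ[ℝ] E)
  | 0 => LinearMap.id
  | r + 1 => ((-1 : ℝ) ^ (r + 1) * S (r + 1)) • LinearMap.id + A ∘ₗ newtonP A S r

/-- Eigenvalue of the Newton transformation on an eigenvector of eigenvalue `x`. -/
noncomputable def muAux (S : ℕ → ℝ) (x : ℝ) : ℕ → ℝ
  | 0 => 1
  | r + 1 => (-1 : ℝ) ^ (r + 1) * S (r + 1) + x * muAux S x r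

lemma esymm_eq_eval (n r : ℕ) (l : Fin n → ℝ) :
    esymm n r l = MvPolynomial.eval l (MvPolynomial.esymm (Fin n) ℝ r) := by
  simp [esymm, MvPolynomial.esymm, MvPolynomial.eval_sum]

lemma esymm_zero (n : ℕ) (l : Fin n → ℝ) : esymm n 0 l = 1 := by
  simp [esymm]

lemma esymm_one_eq (n : ℕ) (l : Fin n → ℝ) : esymm n 1 l = ∑ i, l i := by
  rw [esymm_eq_eval, MvPolynomial.esymm_one]
  simp [MvPolynomial.eval_sum]

/-- Real-number version of Newton's identities. -/
lemma newton_real (n k : ℕ) (l : Fin n → ℝ) :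
    (k : ℝ) * esymm n k l = (-1 : ℝ) ^ (k + 1) *
      ∑ j ∈ Finset.range k, (-1 : ℝ) ^ j * esymm n j l * ∑ i, l i ^ (k - j) := by
  have h := congrArg (MvPolynomial.eval l) (MvPolynomial.mul_esymm_eq_sum (Fin n) ℝ k)
  have hfull : ∑ a ∈ (Finset.HasAntidiagonal.antidiagonal k).filter (fun a => a.1 < k),
      (-1 : ℝ) ^ a.1 * esymm n a.1 l * ∑ i, l i ^ a.2
      = ∑ j ∈ Finset.range k, (-1 : ℝ) ^ j * esymm n j l * ∑ i, l i ^ (k - j) := by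
    have hrm : ((Finset.HasAntidiagonal.antidiagonal k).filter (fun a => ¬ a.1 < k)) = {(k, 0)} := by
      ext ⟨x, y⟩
      simp only [Finset.mem_filter, Finset.HasAntidiagonal.mem_antidiagonal, Finset.mem_singleton,
        Prod.mk.injEq, not_lt]
      omega
    have hsplit := Finset.sum_filter_add_sum_filter_not (Finset.HasAntidiagonal.antidiagonal k)
      (fun a => a.1 < k) (fun a => (-1 : ℝ) ^ a.1 * esymm n a.1 l * ∑ i, l i ^ a.2)
    rw [hrm, Finset.sum_singleton] at hsplit
    have hanti := Finset.Nat.sum_antidiagonal_eq_sum_range_succ_mk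
      (fun a => (-1 : ℝ) ^ a.1 * esymm n a.1 l * ∑ i, l i ^ a.2) k
    rw [hanti, Finset.sum_range_succ] at hsplit
    simpa using hsplit
  rw [← hfull]
  simpa [esymm_eq_eval, MvPolynomial.eval_sum, MvPolynomial.psum] using h

lemma muAux_closed (n : ℕ) (l : Fin n → ℝ) (S : ℕ → ℝ) (hS : ∀ r, S r = esymm n r l)
    (x : ℝ) : ∀ r : ℕ, muAux S x r = ∑ j ∈ Finset.range (r + 1), (-1 : ℝ) ^ j * S j * x ^ (r - j)
  | 0 => by simp [muAux, hS 0, esymm_zero]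
  | r + 1 => by
    rw [Finset.sum_range_succ]
    have hx : ∀ j ∈ Finset.range (r + 1),
        (-1 : ℝ) ^ j * S j * x ^ (r + 1 - j) = x * ((-1 : ℝ) ^ j * S j * x ^ (r - j)) := by
      intro j hj
      rw [Finset.mem_range] at hj
      have : r + 1 - j = (r - j) + 1 := by omega
      rw [this, pow_succ]
      ring
    rw [Finset.sum_congr rfl hx, ← Finset.mul_sum, ← muAux_closed n l S hS x r]
    simp [muAux]
    ring

lemma newtonP_apply_eig {E : Type*} [NormedAddCommGroup E] [InnerProductSpace ℝ E]
    (A : E →ₗ[ℝ] E) (S : ℕ → ℝ) (v : E) (x : ℝ) (hv : A v = x • v) :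
    ∀ r : ℕ, newtonP A S r v = muAux S x r • v
  | 0 => by simp [newtonP, muAux]
  | r + 1 => by
    have ih := newtonP_apply_eig A S v x hv r
    simp only [newtonP, LinearMap.add_apply, LinearMap.smul_apply, LinearMap.id_apply,
      LinearMap.comp_apply, ih, map_smul, hv, muAux]
    rw [smul_smul, ← add_smul]
    ring_nf

theorem trace_sq_comp_newtonP {E : Type*} [NormedAddCommGroup E] [InnerProductSpace ℝ E]
    [FiniteDimensional ℝ E] (n : ℕ) (hdim : Module.finrank ℝ E = n)
    (A : E →ₗ[ℝ] E) (hA : A.IsSymmetric)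
    (b : OrthonormalBasis (Fin n) ℝ E) (lam : Fin n → ℝ)
    (hb : ∀ i, A (b i) = lam i • b i)
    (S : ℕ → ℝ) (hS : ∀ r, S r = esymm n r lam) :
    ∀ r : ℕ, r ≤ n →
      LinearMap.trace ℝ E (A ∘ₗ A ∘ₗ newtonP A S r)
        = (-1 : ℝ) ^ r * (S 1 * S (r + 1) - ((r : ℝ) + 2) * S (r + 2)) := by
  intro r _
  -- trace as a sum over the eigenbasis
  have htr : LinearMap.trace ℝ E (A ∘ₗ A ∘ₗ newtonP A S r)
      = ∑ i, lam i ^ 2 * muAux S (lam i) r := by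
    rw [LinearMap.trace_eq_matrix_trace ℝ b.toBasis, Matrix.trace]
    congr 1
    funext i
    have happl : (A ∘ₗ A ∘ₗ newtonP A S r) (b i)
        = (lam i ^ 2 * muAux S (lam i) r) • b i := by
      simp only [LinearMap.comp_apply, newtonP_apply_eig A S (b i) (lam i) (hb i) r,
        map_smul, hb i, smul_smul]
      ring_nf
    rw [Matrix.diag_apply, LinearMap.toMatrix_apply, OrthonormalBasis.coe_toBasis, happl,
      map_smul]
    simp
  rw [htr]
  -- rewrite using the closed form of muAux and swap sums
  have hswap : ∑ i, lam i ^ 2 * muAux S (lam i) r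
      = ∑ j ∈ Finset.range (r + 1), (-1 : ℝ) ^ j * esymm n j lam * ∑ i, lam i ^ (r + 2 - j) := by
    simp only [muAux_closed n lam S hS, Finset.mul_sum]
    rw [Finset.sum_comm]
    refine Finset.sum_congr rfl fun j hj => Finset.sum_congr rfl fun i _ => ?_
    rw [Finset.mem_range] at hj
    have : r + 2 - j = (r - j) + 2 := by omega
    rw [hS j, this, pow_add]
    ring
  rw [hswap]
  -- Newton's identity with k = r + 2
  have hN := newton_real n (r + 2) lam
  rw [Finset.sum_range_succ] at hN
  have hp1 : ∑ i, lam i ^ (r + 2 - (r + 1)) = esymm n 1 lam := by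
    have : r + 2 - (r + 1) = 1 := by omega
    rw [this, esymm_one_eq]
    simp
  rw [hp1] at hN
  have hsign : ((-1 : ℝ) ^ (r + 2 + 1)) = -(-1 : ℝ) ^ r := by
    rw [pow_succ, pow_succ, pow_succ]; ring
  rw [hsign] at hN
  have hr2 : ∀ j ∈ Finset.range (r + 1), r + 2 - j = (r + 2) - j := fun j _ => rfl
  -- solve for the target sum
  have key : ∑ j ∈ Finset.range (r + 1), (-1 : ℝ) ^ j * esymm n j lam * ∑ i, lam i ^ (r + 2 - j)
      = (-1 : ℝ) ^ r * (esymm n 1 lam * esymm n (r + 1) lam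
        - ((r : ℝ) + 2) * esymm n (r + 2) lam) := by
    push_cast at hN
    rcases Nat.even_or_odd r with h | h
    · rw [h.neg_one_pow] at hN ⊢
      rw [(h.add_one).neg_one_pow] at hN
      linear_combination hN
    · rw [h.neg_one_pow] at hN ⊢
      rw [Even.neg_one_pow (by exact h.add_one)] at hN
      linear_combination -hN
  rw [key, hS 1, hS (r + 1), hS (r + 2)]
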